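/- arXiv:2605.02427 — 3 statements merged into one kernel-verified Lean document; each statement's English description precedes it below -/
import Mathlib

section
/- Let X_1, …, X_P be i.i.d. from a probability measure q on a finite set, let r = dπ/dq be the density of another probability measure π with respect to q, and let f be a function with sup norm at most 1. Then the self-normalized importance sampling estimator π̂^P(f) = (Σ_i r(X_i) f(X_i)) / (Σ_i r(X_i)) satisfies E|π̂^P(f) − π(f)| ≤ (4/√P)·√(1 + χ²(π‖q)) + (8/P)·χ²(π‖q). -/
open Finset

section helpers
variable {B : Type*} [Fintype B] {P : ℕ}

lemma sum_prod_pi (g : Fin P → B → ℝ) :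
    ∑ x : Fin P → B, ∏ i, g i (x i) = ∏ i, ∑ b, g i b :=
  (Fintype.prod_sum _).symm

lemma marg1 (q : B → ℝ) (hq1 : ∑ b, q b = 1) (j : Fin P) (h : B → ℝ) :
    ∑ x : Fin P → B, (∏ i, q (x i)) * h (x j) = ∑ b, q b * h b := by
  have key : ∀ x : Fin P → B, (∏ i, q (x i)) * h (x j)
      = ∏ i, (if i = j then q (x i) * h (x i) else q (x i)) := by
    intro x
    rw [← Finset.mul_prod_erase univ (fun i => if i = j then q (x i) * h (x i) else q (x i))
        (mem_univ j),
      ← Finset.mul_prod_erase univ (fun i => q (x i)) (mem_univ j)]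
    rw [if_pos rfl, Finset.prod_congr rfl
      (fun i hi => if_neg (Finset.ne_of_mem_erase hi))]
    ring
  rw [Finset.sum_congr rfl (fun x _ => key x),
    sum_prod_pi (fun i b => if i = j then q b * h b else q b)]
  have : ∀ i : Fin P, (∑ b, if i = j then q b * h b else q b)
      = if i = j then (∑ b, q b * h b) else 1 := by
    intro i
    split_ifs <;> simp [hq1]
  rw [Finset.prod_congr rfl (fun i _ => this i), Finset.prod_ite_eq' univ j
    (fun _ => ∑ b, q b * h b)]
  simp

lemma marg2 (q : B → ℝ) (hq1 : ∑ b, q b = 1) {j k : Fin P} (hjk : j ≠ k)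
    (h g : B → ℝ) :
    ∑ x : Fin P → B, (∏ i, q (x i)) * (h (x j) * g (x k)) =
      (∑ b, q b * h b) * (∑ b, q b * g b) := by
  have hk : k ∈ (univ : Finset (Fin P)).erase j := by
    simp [hjk.symm]
  have key : ∀ x : Fin P → B, (∏ i, q (x i)) * (h (x j) * g (x k))
      = ∏ i, (if i = j then q (x i) * h (x i)
              else if i = k then q (x i) * g (x i) else q (x i)) := by
    intro x
    set F := fun i => if i = j then q (x i) * h (x i)
              else if i = k then q (x i) * g (x i) else q (x i) with hF
    rw [← Finset.mul_prod_erase univ F (mem_univ j),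
        ← Finset.mul_prod_erase _ F hk,
        ← Finset.mul_prod_erase univ (fun i => q (x i)) (mem_univ j),
        ← Finset.mul_prod_erase _ (fun i => q (x i)) hk]
    have hFj : F j = q (x j) * h (x j) := by simp [hF]
    have hFk : F k = q (x k) * g (x k) := by simp [hF, hjk.symm]
    have : ∀ i ∈ ((univ : Finset (Fin P)).erase j).erase k, F i = q (x i) := by
      intro i hi
      have h1 := Finset.ne_of_mem_erase hi
      have h2 := Finset.ne_of_mem_erase (Finset.mem_of_mem_erase hi)
      simp [hF, h1, h2]
    rw [hFj, hFk, Finset.prod_congr rfl this]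
    ring
  rw [Finset.sum_congr rfl (fun x _ => key x),
    sum_prod_pi (fun i b => if i = j then q b * h b else if i = k then q b * g b else q b)]
  have : ∀ i : Fin P, (∑ b, if i = j then q b * h b else if i = k then q b * g b else q b)
      = if i = j then (∑ b, q b * h b) else if i = k then (∑ b, q b * g b) else 1 := by
    intro i
    split_ifs <;> simp [hq1]
  rw [Finset.prod_congr rfl (fun i _ => this i)]
  rw [← Finset.mul_prod_erase univ _ (mem_univ j), ← Finset.mul_prod_erase _ _ hk]
  rw [if_pos rfl, if_neg hjk.symm, if_pos rfl]
  have : ∀ i ∈ ((univ : Finset (Fin P)).erase j).erase k,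
      (if i = j then (∑ b, q b * h b) else if i = k then (∑ b, q b * g b) else 1) = 1 := by
    intro i hi
    simp [Finset.ne_of_mem_erase hi, Finset.ne_of_mem_erase (Finset.mem_of_mem_erase hi)]
  rw [Finset.prod_congr rfl this]
  simp [mul_assoc]

end helpers

section moments
variable {B : Type*} [Fintype B] {P : ℕ}

lemma mean_sum (q : B → ℝ) (hq1 : ∑ b, q b = 1) (g : B → ℝ) :
    ∑ x : Fin P → B, (∏ i, q (x i)) * (∑ i, g (x i)) = P * ∑ b, q b * g b := by
  have : ∀ x : Fin P → B, (∏ i, q (x i)) * (∑ i, g (x i))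
      = ∑ j, (∏ i, q (x i)) * g (x j) := by
    intro x; rw [Finset.mul_sum]
  rw [Finset.sum_congr rfl (fun x _ => this x), Finset.sum_comm]
  rw [Finset.sum_congr rfl (fun j _ => marg1 q hq1 j g)]
  simp [Finset.card_univ]

lemma sq_sum (q : B → ℝ) (hq1 : ∑ b, q b = 1) (g : B → ℝ) :
    ∑ x : Fin P → B, (∏ i, q (x i)) * (∑ i, g (x i)) ^ 2
      = P * (∑ b, q b * g b ^ 2) + (P * (P - 1)) * (∑ b, q b * g b) ^ 2 := by
  have expand : ∀ x : Fin P → B, (∏ i, q (x i)) * (∑ i, g (x i)) ^ 2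
      = ∑ j, ∑ k, (∏ i, q (x i)) * (g (x j) * g (x k)) := by
    intro x
    rw [sq, Finset.sum_mul_sum, Finset.mul_sum]
    exact Finset.sum_congr rfl fun j _ => by rw [Finset.mul_sum]
  rw [Finset.sum_congr rfl (fun x _ => expand x), Finset.sum_comm]
  have inner : ∀ j : Fin P,
      (∑ x : Fin P → B, ∑ k, (∏ i, q (x i)) * (g (x j) * g (x k)))
      = (∑ b, q b * g b ^ 2) + (P - 1) * (∑ b, q b * g b) ^ 2 := by
    intro j
    rw [Finset.sum_comm]
    rw [← Finset.add_sum_erase _ _ (Finset.mem_univ j)]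
    have diag : (∑ x : Fin P → B, (∏ i, q (x i)) * (g (x j) * g (x j)))
        = ∑ b, q b * g b ^ 2 := by
      have := marg1 (P := P) q hq1 j (fun b => g b ^ 2)
      rw [← this]
      exact Finset.sum_congr rfl fun x _ => by ring
    have off : ∀ k ∈ (Finset.univ : Finset (Fin P)).erase j,
        (∑ x : Fin P → B, (∏ i, q (x i)) * (g (x j) * g (x k)))
        = (∑ b, q b * g b) ^ 2 := by
      intro k hk
      rw [marg2 q hq1 (Finset.ne_of_mem_erase hk).symm g g, sq]
    rw [diag, Finset.sum_congr rfl off, Finset.sum_const,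
      Finset.card_erase_of_mem (Finset.mem_univ j), Finset.card_univ,
      Fintype.card_fin, nsmul_eq_mul]
    have : ((P - 1 : ℕ) : ℝ) = (P : ℝ) - 1 ∨ P = 0 := by
      rcases Nat.eq_zero_or_pos P with h | h
      · exact Or.inr h
      · exact Or.inl (by push_cast [Nat.cast_sub h]; ring)
    rcases this with h | h
    · rw [h]
    · exact absurd (j.2.trans_eq (by rw [h])) (by simp)
  rw [Finset.sum_congr rfl (fun j _ => inner j), Finset.sum_const, Finset.card_univ,
    Fintype.card_fin, nsmul_eq_mul]
  ring

lemma cs_abs (w Z : (Fin P → B) → ℝ) (hw0 : ∀ x, 0 ≤ w x) (hw1 : ∑ x, w x = 1) :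
    ∑ x, w x * |Z x| ≤ Real.sqrt (∑ x, w x * Z x ^ 2) := by
  have key : (∑ x, w x * |Z x|) ^ 2 ≤ ∑ x, w x * Z x ^ 2 := by
    have h1 : ∀ x, w x * |Z x| = Real.sqrt (w x) * (Real.sqrt (w x) * |Z x|) := by
      intro x
      rw [← mul_assoc, Real.mul_self_sqrt (hw0 x)]
    have := Finset.sum_mul_sq_le_sq_mul_sq Finset.univ
      (fun x => Real.sqrt (w x)) (fun x => Real.sqrt (w x) * |Z x|)
    calc (∑ x, w x * |Z x|) ^ 2
        = (∑ x, Real.sqrt (w x) * (Real.sqrt (w x) * |Z x|)) ^ 2 := by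
          rw [Finset.sum_congr rfl (fun x _ => h1 x)]
      _ ≤ (∑ x, Real.sqrt (w x) ^ 2) * ∑ x, (Real.sqrt (w x) * |Z x|) ^ 2 := this
      _ = ∑ x, w x * Z x ^ 2 := by
          have e1 : ∀ x : Fin P → B, Real.sqrt (w x) ^ 2 = w x :=
            fun x => Real.sq_sqrt (hw0 x)
          have e2 : ∀ x : Fin P → B, (Real.sqrt (w x) * |Z x|) ^ 2 = w x * Z x ^ 2 := by
            intro x
            rw [mul_pow, e1 x, sq_abs]
          rw [Finset.sum_congr rfl (fun x _ => e1 x),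
            Finset.sum_congr rfl (fun x _ => e2 x), hw1, one_mul]
  have hnn : 0 ≤ ∑ x, w x * |Z x| :=
    Finset.sum_nonneg fun x _ => mul_nonneg (hw0 x) (abs_nonneg _)
  exact Real.le_sqrt_of_sq_le key

end moments

section dev
variable {B : Type*} [Fintype B] {P : ℕ}

lemma weights_sum_one (q : B → ℝ) (hq1 : ∑ b, q b = 1) :
    ∑ x : Fin P → B, ∏ i, q (x i) = 1 := by
  rw [sum_prod_pi (fun _ b => q b)]
  simp [hq1]

lemma dev (hP : 1 ≤ P) (q : B → ℝ) (hq0 : ∀ b, 0 ≤ q b) (hq1 : ∑ b, q b = 1)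
    (g : B → ℝ) :
    ∑ x : Fin P → B, (∏ i, q (x i)) * |(∑ i, g (x i)) / P - ∑ b, q b * g b|
      ≤ Real.sqrt ((∑ b, q b * g b ^ 2) / P) := by
  set w := fun x : Fin P → B => ∏ i, q (x i) with hw
  have hw0 : ∀ x, 0 ≤ w x := fun x => Finset.prod_nonneg fun i _ => hq0 (x i)
  have hw1 : ∑ x, w x = 1 := weights_sum_one q hq1
  have hPpos : (0:ℝ) < P := by exact_mod_cast hP
  set m := ∑ b, q b * g b with hm
  set v := ∑ b, q b * g b ^ 2 with hv
  have hcs := cs_abs w (fun x => (∑ i, g (x i)) / P - m) hw0 hw1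
  refine hcs.trans (Real.sqrt_le_sqrt ?_)
  have expand : ∀ x : Fin P → B, w x * ((∑ i, g (x i)) / P - m) ^ 2
      = (1/(P:ℝ)^2) * (w x * (∑ i, g (x i)) ^ 2)
        - (2*m/P) * (w x * (∑ i, g (x i))) + m^2 * w x := by
    intro x
    field_simp
    ring
  rw [Finset.sum_congr rfl (fun x _ => expand x), Finset.sum_add_distrib,
    Finset.sum_sub_distrib, ← Finset.mul_sum, ← Finset.mul_sum, ← Finset.mul_sum]
  rw [sq_sum q hq1 g, mean_sum q hq1 g, hw1]
  have key : (1/(P:ℝ)^2) * ((P:ℝ) * v + ((P:ℝ) * ((P:ℝ) - 1)) * m ^ 2)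
      - (2*m/P) * ((P:ℝ) * m) + m^2 * 1 = v / P - m^2 / P := by
    field_simp
    ring
  rw [key]
  have : 0 ≤ m^2 / P := by positivity
  linarith

end dev



/-- **Bounded-test particle approximation for SNIS.**
For `X_1, …, X_P` i.i.d. from `q` (modeled by the product weights `∏ i, q (x i)`
over sample vectors `x : Fin P → B`), density `r = π/q`, and `‖f‖_∞ ≤ 1`, the
self-normalized importance sampling estimator satisfies
`E|π̂^P(f) − π(f)| ≤ (4/√P)√(1 + χ²(π‖q)) + (8/P)·χ²(π‖q)`.
The estimator is defined to be `0` on the event `Σ_i r(X_i) = 0`. -/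
theorem stmt4 {B : Type*} [Fintype B] (P : ℕ) (hP : 1 ≤ P)
    (q pm : B → ℝ) (hq0 : ∀ b, 0 ≤ q b) (hq1 : ∑ b, q b = 1)
    (hpm0 : ∀ b, 0 ≤ pm b) (hpm1 : ∑ b, pm b = 1)
    (habs : ∀ b, pm b ≠ 0 → q b ≠ 0)
    (f : B → ℝ) (hf : ∀ b, |f b| ≤ 1)
    (r : B → ℝ) (hr : ∀ b, r b = pm b / q b)
    (χ2 : ℝ) (hχ : χ2 = (∑ b, pm b ^ 2 / q b) - 1) :
    ∑ x : Fin P → B, (∏ i, q (x i)) *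
        |(if (∑ i, r (x i)) = 0 then 0
          else (∑ i, r (x i) * f (x i)) / (∑ i, r (x i))) - ∑ b, pm b * f b|
      ≤ 4 / Real.sqrt P * Real.sqrt (1 + χ2) + 8 / P * χ2 := by
  have hPpos : (0:ℝ) < P := by exact_mod_cast hP
  have hPne : (P:ℝ) ≠ 0 := ne_of_gt hPpos
  -- basic facts about r
  have hr0 : ∀ b, 0 ≤ r b := fun b => (hr b) ▸ div_nonneg (hpm0 b) (hq0 b)
  have hpm_of_q : ∀ b, q b = 0 → pm b = 0 := by
    intro b h
    by_contra hc
    exact habs b hc h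
  have hqr : ∀ b, q b * r b = pm b := by
    intro b
    rcases eq_or_ne (q b) 0 with h | h
    · simp [hr b, h, hpm_of_q b h]
    · rw [hr b]; field_simp
  have hqr2 : ∀ b, q b * r b ^ 2 = pm b ^ 2 / q b := by
    intro b
    rcases eq_or_ne (q b) 0 with h | h
    · simp [hr b, h, hpm_of_q b h]
    · rw [hr b]; field_simp
  have hEr : ∑ b, q b * r b = 1 := by
    rw [Finset.sum_congr rfl fun b _ => hqr b, hpm1]
  have hrho : (∑ b, q b * r b ^ 2) = 1 + χ2 := by
    rw [Finset.sum_congr rfl fun b _ => hqr2 b, hχ]; ring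
  have hm : ∑ b, q b * (r b * f b) = ∑ b, pm b * f b := by
    refine Finset.sum_congr rfl fun b _ => ?_
    rw [← mul_assoc, hqr b]
  -- χ2 ≥ 0 via Cauchy-Schwarz
  have hχnn : 0 ≤ χ2 := by
    have hcs := Finset.sum_mul_sq_le_sq_mul_sq Finset.univ
      (fun b => Real.sqrt (q b)) (fun b => Real.sqrt (q b) * r b)
    have e1 : ∀ b : B, Real.sqrt (q b) * (Real.sqrt (q b) * r b) = q b * r b := by
      intro b; rw [← mul_assoc, Real.mul_self_sqrt (hq0 b)]
    have e2 : ∀ b : B, Real.sqrt (q b) ^ 2 = q b := fun b => Real.sq_sqrt (hq0 b)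
    have e3 : ∀ b : B, (Real.sqrt (q b) * r b) ^ 2 = q b * r b ^ 2 := by
      intro b; rw [mul_pow, e2 b]
    rw [Finset.sum_congr rfl fun b _ => e1 b, Finset.sum_congr rfl fun b _ => e2 b,
      Finset.sum_congr rfl fun b _ => e3 b, hEr, hq1, hrho] at hcs
    nlinarith
  have hvT : ∑ b, q b * (r b * f b) ^ 2 ≤ 1 + χ2 := by
    rw [← hrho]
    refine Finset.sum_le_sum fun b _ => ?_
    have hf2 : f b ^ 2 ≤ 1 := by
      have := hf b
      nlinarith [abs_nonneg (f b), sq_abs (f b)]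
    have hqr2nn : 0 ≤ q b * r b ^ 2 := mul_nonneg (hq0 b) (sq_nonneg _)
    calc q b * (r b * f b) ^ 2 = (q b * r b ^ 2) * f b ^ 2 := by ring
      _ ≤ (q b * r b ^ 2) * 1 := mul_le_mul_of_nonneg_left hf2 hqr2nn
      _ = q b * r b ^ 2 := mul_one _
  set m := ∑ b, pm b * f b with hmdef
  -- pointwise bound
  have point : ∀ x : Fin P → B,
      |(if (∑ i, r (x i)) = 0 then 0
        else (∑ i, r (x i) * f (x i)) / (∑ i, r (x i))) - m|
      ≤ |(∑ i, r (x i) * f (x i)) / P - m| + |(∑ i, r (x i)) / P - 1| := by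
    intro x
    set S := ∑ i, r (x i) with hSdef
    set T := ∑ i, r (x i) * f (x i) with hTdef
    rcases eq_or_ne S 0 with hS | hS
    · have hri : ∀ i ∈ Finset.univ, r (x i) = 0 := by
        intro i hi
        exact (Finset.sum_eq_zero_iff_of_nonneg fun j _ => hr0 (x j)).1 hS i hi
      have hT : T = 0 := Finset.sum_eq_zero fun i hi => by rw [hri i hi, zero_mul]
      rw [if_pos hS, hS, hT, zero_div]
      have : |(0:ℝ) - 1| = 1 := by norm_num
      rw [this]
      have := abs_nonneg ((0:ℝ) - m)
      linarith [le_refl |(0:ℝ) - m|]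
    · rw [if_neg hS]
      have hSpos : 0 < S := lt_of_le_of_ne
        (Finset.sum_nonneg fun i _ => hr0 (x i)) (Ne.symm hS)
      have hTS : |T / S| ≤ 1 := by
        rw [abs_div, abs_of_pos hSpos, div_le_one hSpos]
        calc |T| ≤ ∑ i, |r (x i) * f (x i)| := Finset.abs_sum_le_sum_abs _ _
          _ ≤ ∑ i, r (x i) := by
            refine Finset.sum_le_sum fun i _ => ?_
            rw [abs_mul, abs_of_nonneg (hr0 (x i))]
            calc r (x i) * |f (x i)| ≤ r (x i) * 1 :=
                mul_le_mul_of_nonneg_left (hf (x i)) (hr0 (x i))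
              _ = r (x i) := mul_one _
      have hid : T / S - m = (T / P - m) + (T / S) * (1 - S / P) := by
        field_simp
        ring
      calc |T / S - m| = |(T / P - m) + (T / S) * (1 - S / P)| := by rw [hid]
        _ ≤ |T / P - m| + |(T / S) * (1 - S / P)| := abs_add_le _ _
        _ ≤ |T / P - m| + |S / P - 1| := by
            rw [abs_mul]
            have h1 : |T / S| * |1 - S / P| ≤ 1 * |1 - S / P| :=
              mul_le_mul_of_nonneg_right hTS (abs_nonneg _)
            rw [one_mul] at h1
            rw [abs_sub_comm (1:ℝ) (S / (P:ℝ))] at h1 ⊢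
            linarith
  -- sum up
  have hw0 : ∀ x : Fin P → B, (0:ℝ) ≤ ∏ i, q (x i) :=
    fun x => Finset.prod_nonneg fun i _ => hq0 (x i)
  have step1 : ∑ x : Fin P → B, (∏ i, q (x i)) *
      |(if (∑ i, r (x i)) = 0 then 0
        else (∑ i, r (x i) * f (x i)) / (∑ i, r (x i))) - m|
      ≤ (∑ x : Fin P → B, (∏ i, q (x i)) * |(∑ i, r (x i) * f (x i)) / P - m|)
        + ∑ x : Fin P → B, (∏ i, q (x i)) * |(∑ i, r (x i)) / P - 1| := by
    rw [← Finset.sum_add_distrib]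
    refine Finset.sum_le_sum fun x _ => ?_
    rw [← mul_add]
    exact mul_le_mul_of_nonneg_left (point x) (hw0 x)
  have dev1 : ∑ x : Fin P → B, (∏ i, q (x i)) * |(∑ i, r (x i) * f (x i)) / P - m|
      ≤ Real.sqrt ((1 + χ2) / P) := by
    have := dev hP q hq0 hq1 (fun b => r b * f b)
    rw [hm] at this
    refine this.trans (Real.sqrt_le_sqrt ?_)
    gcongr
  have dev2 : ∑ x : Fin P → B, (∏ i, q (x i)) * |(∑ i, r (x i)) / P - 1|
      ≤ Real.sqrt ((1 + χ2) / P) := by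
    have := dev hP q hq0 hq1 r
    rw [hEr, hrho] at this
    exact this
  have hsqrt : Real.sqrt ((1 + χ2) / P) = Real.sqrt (1 + χ2) / Real.sqrt P :=
    Real.sqrt_div (by linarith) _
  have hfinal : 2 * (Real.sqrt (1 + χ2) / Real.sqrt P)
      ≤ 4 / Real.sqrt P * Real.sqrt (1 + χ2) + 8 / P * χ2 := by
    have hsP : 0 < Real.sqrt P := Real.sqrt_pos.2 hPpos
    have h1 : 0 ≤ Real.sqrt (1 + χ2) / Real.sqrt P :=
      div_nonneg (Real.sqrt_nonneg _) hsP.le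
    have h2 : 0 ≤ 8 / (P:ℝ) * χ2 := by positivity
    have h3 : 4 / Real.sqrt P * Real.sqrt (1 + χ2)
        = 4 * (Real.sqrt (1 + χ2) / Real.sqrt P) := by ring
    linarith
  calc ∑ x : Fin P → B, (∏ i, q (x i)) *
      |(if (∑ i, r (x i)) = 0 then 0
        else (∑ i, r (x i) * f (x i)) / (∑ i, r (x i))) - m|
      ≤ Real.sqrt ((1 + χ2) / P) + Real.sqrt ((1 + χ2) / P) :=
        step1.trans (add_le_add dev1 dev2)
    _ = 2 * (Real.sqrt (1 + χ2) / Real.sqrt P) := by rw [hsqrt]; ring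
    _ ≤ _ := hfinal
end

section
/- Let π_j and q_j be probability mass functions on a finite set with q_j > 0 on the support of π_j, let ψ > 0, and define the tilted proposal q̃_j(b) = q_j(b)ψ(b) / Σ_{b'} q_j(b')ψ(b'). Writing r(b) = π_j(b)/q_j(b), the exact identity 1 + χ²(π_j‖q̃_j) = E_{q_j}[r²] − Cov_{q_j}(ψ, r²/ψ) holds. -/
/-- **Exact χ² identity for the ψ-tilted proposal.**
With `q̃(b) = q(b)ψ(b)/Σ_{b'} q(b')ψ(b')` and `r = π/q`,
`1 + χ²(π‖q̃) = E_q[r²] − Cov_q(ψ, r²/ψ)`. -/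
theorem stmt8 {B : Type*} [Fintype B]
    (pm q ψ : B → ℝ)
    (hpm0 : ∀ b, 0 ≤ pm b) (hpm1 : ∑ b, pm b = 1)
    (hq0 : ∀ b, 0 ≤ q b) (hq1 : ∑ b, q b = 1)
    (habs : ∀ b, 0 < pm b → 0 < q b)
    (hψ : ∀ b, 0 < ψ b)
    (r : B → ℝ) (hr : ∀ b, r b = pm b / q b)
    (C : ℝ) (hC : C = ∑ b, q b * ψ b)
    (qt : B → ℝ) (hqt : ∀ b, qt b = q b * ψ b / C) :
    1 + ((∑ b, pm b ^ 2 / qt b) - 1)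
      = (∑ b, q b * r b ^ 2)
        - ((∑ b, q b * (ψ b * (r b ^ 2 / ψ b)))
            - (∑ b, q b * ψ b) * (∑ b, q b * (r b ^ 2 / ψ b))) := by
  have hCpos : 0 < C := by
    rw [hC]
    have hex : ∃ b, 0 < q b := by
      by_contra h
      push_neg at h
      have : ∑ b, q b = 0 :=
        Finset.sum_eq_zero fun b _ => le_antisymm (h b) (hq0 b)
      rw [this] at hq1; norm_num at hq1
    obtain ⟨b, hb⟩ := hex
    exact Finset.sum_pos' (fun i _ => mul_nonneg (hq0 i) (hψ i).le)
      ⟨b, Finset.mem_univ b, mul_pos hb (hψ b)⟩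
  have h1 : ∀ b, ψ b * (r b ^ 2 / ψ b) = r b ^ 2 := fun b => by
    rw [mul_comm, div_mul_cancel₀ _ (hψ b).ne']
  have key : ∀ b, pm b ^ 2 / qt b = C * (q b * (r b ^ 2 / ψ b)) := by
    intro b
    rcases eq_or_lt_of_le (hq0 b) with h | h
    · have hpm : pm b = 0 := by
        by_contra hne
        have := habs b (lt_of_le_of_ne (hpm0 b) (Ne.symm hne))
        rw [← h] at this; exact lt_irrefl 0 this
      simp [hqt, hpm, ← h]
    · rw [hqt, hr, div_div_eq_mul_div, div_pow]
      field_simp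
  simp only [key, h1, hC]
  rw [← Finset.mul_sum]
  ring
end

section
/- With the tilted proposal q̃_j(b) ∝ q_j(b)ψ(b) and r = π_j/q_j, one has χ²(π_j‖q̃_j) < χ²(π_j‖q_j) if and only if Cov_{q_j}(ψ, r²/ψ) > 0. -/
/-- **Strict variance reduction iff positive covariance.**
With the tilted proposal `q̃(b) ∝ q(b)ψ(b)` and `r = π/q`,
`χ²(π‖q̃) < χ²(π‖q)` if and only if `Cov_q(ψ, r²/ψ) > 0`. -/
theorem stmt9 {B : Type*} [Fintype B]
    (pm q ψ : B → ℝ)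
    (hpm0 : ∀ b, 0 ≤ pm b) (hpm1 : ∑ b, pm b = 1)
    (hq0 : ∀ b, 0 ≤ q b) (hq1 : ∑ b, q b = 1)
    (habs : ∀ b, 0 < pm b → 0 < q b)
    (hψ : ∀ b, 0 < ψ b)
    (r : B → ℝ) (hr : ∀ b, r b = pm b / q b)
    (qt : B → ℝ) (hqt : ∀ b, qt b = q b * ψ b / ∑ b', q b' * ψ b') :
    ((∑ b, pm b ^ 2 / qt b) - 1 < (∑ b, pm b ^ 2 / q b) - 1)
      ↔ 0 < (∑ b, q b * (ψ b * (r b ^ 2 / ψ b)))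
            - (∑ b, q b * ψ b) * (∑ b, q b * (r b ^ 2 / ψ b)) := by
  set S : ℝ := ∑ b', q b' * ψ b' with hSdef
  -- S > 0
  have hex : ∃ b : B, 0 < q b := by
    by_contra h
    push_neg at h
    have : ∀ b : B, q b = 0 := fun b => le_antisymm (h b) (hq0 b)
    simp [this] at hq1
  obtain ⟨b0, hb0⟩ := hex
  have hS : 0 < S := by
    refine Finset.sum_pos' (fun b _ => mul_nonneg (hq0 b) (hψ b).le) ⟨b0, Finset.mem_univ b0, ?_⟩
    exact mul_pos hb0 (hψ b0)
  have hqz : ∀ b, q b = 0 → pm b = 0 := by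
    intro b hb
    by_contra h
    have := habs b (lt_of_le_of_ne (hpm0 b) (Ne.symm h))
    linarith
  have key1 : ∀ b, q b * (ψ b * (r b ^ 2 / ψ b)) = pm b ^ 2 / q b := by
    intro b
    rcases eq_or_lt_of_le (hq0 b) with hb | hb
    · simp [← hb]
    · rw [hr b]
      field_simp [hb.ne', (hψ b).ne']
  have key2 : ∀ b, pm b ^ 2 / qt b = S * (q b * (r b ^ 2 / ψ b)) := by
    intro b
    rcases eq_or_lt_of_le (hq0 b) with hb | hb
    · simp [← hb, hqz b hb.symm]
    · rw [hqt b, hr b]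
      field_simp [hb.ne', (hψ b).ne', hS.ne']
  have e1 : (∑ b, q b * (ψ b * (r b ^ 2 / ψ b))) = ∑ b, pm b ^ 2 / q b :=
    Finset.sum_congr rfl (fun b _ => key1 b)
  have e2 : (∑ b, pm b ^ 2 / qt b) = S * ∑ b, q b * (r b ^ 2 / ψ b) := by
    rw [Finset.mul_sum]
    exact Finset.sum_congr rfl (fun b _ => key2 b)
  rw [e1, e2]
  constructor <;> intro h <;> linarith
end
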